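/- arXiv:1811.03197 — 2 statements merged into one kernel-verified Lean document; each statement's English description precedes it below -/
import Mathlib

section
/- Let n be a natural number, b > 0, and let c : (Fin n → ℝ) → ℝ be a bounded function. Then for all adjacent streams σ, σ' (i.e. d(σ, σ') = 1), |SS_{σ,b}(c) − SS_{σ',b}(c)| ≤ (exp(b) − 1) · SS_{σ',b}(c). In particular, the local sensitivity of the function σ ↦ SS_{σ,b}(c) at σ' is at most (exp(b) − 1) · SS_{σ',b}(c). -/
/-- Local sensitivity of `c` at `σ`: the supremum of `|c σ - c σ'|` over streams `σ'`
adjacent to `σ` (Hamming distance 1). -/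
noncomputable def localSens {n : ℕ} (c : (Fin n → ℝ) → ℝ) (σ : Fin n → ℝ) : ℝ :=
  sSup {x : ℝ | ∃ σ' : Fin n → ℝ, hammingDist σ σ' = 1 ∧ x = |c σ - c σ'|}

/-- `b`-smooth sensitivity of `c` at `σ`: the supremum of
`LS_{σ'}(c) · exp(-b · d(σ, σ'))` over all streams `σ'`. -/
noncomputable def smoothSens {n : ℕ} (b : ℝ) (c : (Fin n → ℝ) → ℝ) (σ : Fin n → ℝ) : ℝ :=
  sSup {x : ℝ | ∃ σ' : Fin n → ℝ, x = localSens c σ' * Real.exp (-(b * hammingDist σ σ'))}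

lemma localSens_le {n : ℕ} {c : (Fin n → ℝ) → ℝ} {M : ℝ} (hM : ∀ σ, |c σ| ≤ M)
    (σ : Fin n → ℝ) : localSens c σ ≤ 2 * M := by
  apply Real.sSup_le
  · rintro x ⟨τ, -, rfl⟩
    calc |c σ - c τ| ≤ |c σ| + |c τ| := abs_sub _ _
      _ ≤ M + M := add_le_add (hM σ) (hM τ)
      _ = 2 * M := by ring
  · have := (abs_nonneg (c σ)).trans (hM σ); linarith

lemma localSens_nonneg {n : ℕ} (hn : 0 < n) {c : (Fin n → ℝ) → ℝ} {M : ℝ}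
    (hM : ∀ σ, |c σ| ≤ M) (σ : Fin n → ℝ) : 0 ≤ localSens c σ := by
  obtain ⟨i⟩ : Nonempty (Fin n) := ⟨⟨0, hn⟩⟩
  set τ := Function.update σ i (σ i + 1) with hτ
  have hd : hammingDist σ τ = 1 := by
    have : (Finset.univ.filter fun j => σ j ≠ τ j) = {i} := by
      ext j
      simp only [Finset.mem_filter, Finset.mem_univ, true_and, Finset.mem_singleton, hτ,
        Function.update]
      by_cases h : j = i <;> simp [h]
    simp [hammingDist, this]
  have hmem : |c σ - c τ| ∈ {x : ℝ | ∃ σ' : Fin n → ℝ, hammingDist σ σ' = 1 ∧ x = |c σ - c σ'|} :=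
    ⟨τ, hd, rfl⟩
  have hbdd : BddAbove {x : ℝ | ∃ σ' : Fin n → ℝ, hammingDist σ σ' = 1 ∧ x = |c σ - c σ'|} := by
    refine ⟨2 * M, ?_⟩
    rintro x ⟨τ', -, rfl⟩
    calc |c σ - c τ'| ≤ |c σ| + |c τ'| := abs_sub _ _
      _ ≤ M + M := add_le_add (hM σ) (hM τ')
      _ = 2 * M := by ring
  exact (abs_nonneg _).trans (le_csSup hbdd hmem)

lemma smoothSens_bddAbove {n : ℕ} {b : ℝ} (hb : 0 < b) {c : (Fin n → ℝ) → ℝ} {M : ℝ}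
    (hM : ∀ σ, |c σ| ≤ M) (σ : Fin n → ℝ) (hn : 0 < n) :
    BddAbove {x : ℝ | ∃ σ' : Fin n → ℝ, x = localSens c σ' * Real.exp (-(b * hammingDist σ σ'))} := by
  refine ⟨2 * M, ?_⟩
  rintro x ⟨τ, rfl⟩
  have h1 : Real.exp (-(b * hammingDist σ τ)) ≤ 1 := by
    rw [Real.exp_le_one_iff]
    have : (0:ℝ) ≤ b * hammingDist σ τ := by positivity
    linarith
  calc localSens c τ * Real.exp (-(b * hammingDist σ τ))
      ≤ 2 * M * 1 := mul_le_mul (localSens_le hM τ) h1 (Real.exp_pos _).le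
        (by have := (abs_nonneg (c σ)).trans (hM σ); linarith)
    _ = 2 * M := mul_one _

lemma smoothSens_nonneg {n : ℕ} (hn : 0 < n) {b : ℝ} (hb : 0 < b) {c : (Fin n → ℝ) → ℝ} {M : ℝ}
    (hM : ∀ σ, |c σ| ≤ M) (σ : Fin n → ℝ) : 0 ≤ smoothSens b c σ := by
  have hmem : localSens c σ * Real.exp (-(b * hammingDist σ σ)) ∈
      {x : ℝ | ∃ σ' : Fin n → ℝ, x = localSens c σ' * Real.exp (-(b * hammingDist σ σ'))} :=
    ⟨σ, rfl⟩
  have h0 : 0 ≤ localSens c σ * Real.exp (-(b * hammingDist σ σ)) :=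
    mul_nonneg (localSens_nonneg hn hM σ) (Real.exp_pos _).le
  exact h0.trans (le_csSup (smoothSens_bddAbove hb hM σ hn) hmem)

lemma smoothSens_le_exp_mul {n : ℕ} (hn : 0 < n) {b : ℝ} (hb : 0 < b) {c : (Fin n → ℝ) → ℝ}
    {M : ℝ} (hM : ∀ σ, |c σ| ≤ M) {σ σ' : Fin n → ℝ} (hadj : hammingDist σ σ' = 1) :
    smoothSens b c σ ≤ Real.exp b * smoothSens b c σ' := by
  apply Real.sSup_le
  · rintro x ⟨τ, rfl⟩
    have htri : (hammingDist σ' τ : ℝ) ≤ 1 + hammingDist σ τ := by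
      have h := hammingDist_triangle σ' σ τ
      rw [hammingDist_comm σ' σ, hadj] at h
      exact_mod_cast h
    have hexp : Real.exp (-(b * hammingDist σ τ)) ≤
        Real.exp b * Real.exp (-(b * hammingDist σ' τ)) := by
      rw [← Real.exp_add, Real.exp_le_exp]
      nlinarith
    have hls : 0 ≤ localSens c τ := localSens_nonneg hn hM τ
    have hmem : localSens c τ * Real.exp (-(b * hammingDist σ' τ)) ≤ smoothSens b c σ' :=
      le_csSup (smoothSens_bddAbove hb hM σ' hn) ⟨τ, rfl⟩
    calc localSens c τ * Real.exp (-(b * hammingDist σ τ))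
        ≤ localSens c τ * (Real.exp b * Real.exp (-(b * hammingDist σ' τ))) :=
          mul_le_mul_of_nonneg_left hexp hls
      _ = Real.exp b * (localSens c τ * Real.exp (-(b * hammingDist σ' τ))) := by ring
      _ ≤ Real.exp b * smoothSens b c σ' :=
          mul_le_mul_of_nonneg_left hmem (Real.exp_pos _).le
  · exact mul_nonneg (Real.exp_pos _).le (smoothSens_nonneg hn hb hM σ')

lemma smoothSens_abs_sub {n : ℕ} (hn : 0 < n) {b : ℝ} (hb : 0 < b) {c : (Fin n → ℝ) → ℝ}
    {M : ℝ} (hM : ∀ σ, |c σ| ≤ M) {σ σ' : Fin n → ℝ} (hadj : hammingDist σ σ' = 1) :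
    |smoothSens b c σ - smoothSens b c σ'| ≤ (Real.exp b - 1) * smoothSens b c σ' := by
  have h1 : smoothSens b c σ ≤ Real.exp b * smoothSens b c σ' :=
    smoothSens_le_exp_mul hn hb hM hadj
  have h2 : smoothSens b c σ' ≤ Real.exp b * smoothSens b c σ :=
    smoothSens_le_exp_mul hn hb hM (by rw [hammingDist_comm]; exact hadj)
  have hσ : 0 ≤ smoothSens b c σ := smoothSens_nonneg hn hb hM σ
  have hσ' : 0 ≤ smoothSens b c σ' := smoothSens_nonneg hn hb hM σ'
  have he : 1 < Real.exp b := by rw [Real.one_lt_exp_iff]; exact hb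
  rw [abs_sub_le_iff]
  constructor
  · nlinarith
  · -- smoothSens σ' - smoothSens σ ≤ (e^b - 1) * smoothSens σ'
    nlinarith [Real.exp_pos b, mul_le_mul_of_nonneg_left h2 (Real.exp_pos b).le,
      Real.add_one_le_exp b, Real.add_one_le_exp (-b), Real.exp_neg b]

/-- For adjacent streams `σ, σ'`, `|SS_{σ,b}(c) − SS_{σ',b}(c)| ≤ (exp(b) − 1) · SS_{σ',b}(c)`;
in particular the local sensitivity of `σ ↦ SS_{σ,b}(c)` at `σ'` is at most
`(exp(b) − 1) · SS_{σ',b}(c)`. -/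
theorem smoothSens_lipschitz {n : ℕ} (b : ℝ) (hb : 0 < b)
    (c : (Fin n → ℝ) → ℝ) (M : ℝ) (hM : ∀ σ : Fin n → ℝ, |c σ| ≤ M)
    (σ σ' : Fin n → ℝ) (hadj : hammingDist σ σ' = 1) :
    |smoothSens b c σ - smoothSens b c σ'| ≤ (Real.exp b - 1) * smoothSens b c σ' ∧
    localSens (fun τ => smoothSens b c τ) σ' ≤ (Real.exp b - 1) * smoothSens b c σ' := by
  have hn : 0 < n := by
    rcases Nat.eq_zero_or_pos n with h | h
    · subst h
      have : σ = σ' := funext fun i => i.elim0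
      rw [this, hammingDist_self] at hadj
      omega
    · exact h
  have hσ' : 0 ≤ smoothSens b c σ' := smoothSens_nonneg hn hb hM σ'
  have he : 1 < Real.exp b := by rw [Real.one_lt_exp_iff]; exact hb
  refine ⟨smoothSens_abs_sub hn hb hM hadj, ?_⟩
  apply Real.sSup_le
  · rintro x ⟨τ, hτ, rfl⟩
    have := smoothSens_abs_sub hn hb hM (σ := τ) (σ' := σ') (by rw [hammingDist_comm]; exact hτ)
    rw [show |(fun τ => smoothSens b c τ) σ' - (fun τ => smoothSens b c τ) τ| = |smoothSens b c τ - smoothSens b c σ'| from abs_sub_comm _ _]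
    exact this
  · nlinarith
end

section
/- (Smooth-sensitivity bound for the offset threshold) Let n be a natural number, b > 0, and let f : (Fin n → ℝ) → ℝ be a bounded function. Let a > 0 and o ≥ 0 be reals with (exp(b) − 1) · o / a < 1, and set κ = (1 − (exp(b) − 1) · o / a)⁻¹. Define g : (Fin n → ℝ) → ℝ by g(σ) = f(σ) + (κ · o / a) · SS_{σ,b}(f). Then for every stream σ, SS_{σ,b}(g) ≤ κ · SS_{σ,b}(f). In particular κ · SS_{σ,b}(f) is a b-smooth upper bound on the local sensitivity of g. -/
lemma ls_nonneg {n : ℕ} (c : (Fin n → ℝ) → ℝ) (σ : Fin n → ℝ) : 0 ≤ localSens c σ :=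
  Real.sSup_nonneg (by rintro x ⟨σ', -, rfl⟩; exact abs_nonneg _)

lemma ls_le {n : ℕ} (c : (Fin n → ℝ) → ℝ) (M : ℝ) (hM : ∀ σ, |c σ| ≤ M) (σ : Fin n → ℝ) :
    localSens c σ ≤ 2 * M := by
  have hM0 : 0 ≤ M := le_trans (abs_nonneg _) (hM σ)
  apply Real.sSup_le
  · rintro x ⟨σ', -, rfl⟩
    calc |c σ - c σ'| ≤ |c σ| + |c σ'| := abs_sub _ _
    _ ≤ M + M := add_le_add (hM σ) (hM σ')
    _ = 2 * M := by ring
  · linarith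

lemma abs_le_ls {n : ℕ} (c : (Fin n → ℝ) → ℝ) (M : ℝ) (hM : ∀ σ, |c σ| ≤ M)
    {σ σ' : Fin n → ℝ} (hd : hammingDist σ σ' = 1) : |c σ - c σ'| ≤ localSens c σ := by
  refine le_csSup ⟨2 * M, ?_⟩ ⟨σ', hd, rfl⟩
  rintro x ⟨τ, -, rfl⟩
  calc |c σ - c τ| ≤ |c σ| + |c τ| := abs_sub _ _
  _ ≤ M + M := add_le_add (hM σ) (hM τ)
  _ = 2 * M := by ring

lemma exp_le_one' (b : ℝ) (hb : 0 < b) (d : ℕ) : Real.exp (-(b * (d : ℝ))) ≤ 1 := by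
  rw [Real.exp_le_one_iff]
  have : (0:ℝ) ≤ (d:ℝ) := Nat.cast_nonneg d
  nlinarith

lemma ss_bdd {n : ℕ} (b : ℝ) (hb : 0 < b) (c : (Fin n → ℝ) → ℝ) (M : ℝ)
    (hM : ∀ σ, |c σ| ≤ M) (σ : Fin n → ℝ) :
    ∀ x ∈ {x : ℝ | ∃ σ' : Fin n → ℝ, x = localSens c σ' * Real.exp (-(b * hammingDist σ σ'))},
      x ≤ 2 * M := by
  have hM0 : 0 ≤ M := le_trans (abs_nonneg _) (hM σ)
  rintro x ⟨σ', rfl⟩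
  calc localSens c σ' * Real.exp (-(b * hammingDist σ σ'))
      ≤ (2 * M) * 1 := by
        apply mul_le_mul (ls_le c M hM σ') (exp_le_one' b hb _) (Real.exp_pos _).le (by linarith)
  _ = 2 * M := mul_one _

lemma le_ss {n : ℕ} (b : ℝ) (hb : 0 < b) (c : (Fin n → ℝ) → ℝ) (M : ℝ)
    (hM : ∀ σ, |c σ| ≤ M) (σ σ' : Fin n → ℝ) :
    localSens c σ' * Real.exp (-(b * hammingDist σ σ')) ≤ smoothSens b c σ :=
  le_csSup ⟨2 * M, ss_bdd b hb c M hM σ⟩ ⟨σ', rfl⟩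

lemma ls_le_ss {n : ℕ} (b : ℝ) (hb : 0 < b) (c : (Fin n → ℝ) → ℝ) (M : ℝ)
    (hM : ∀ σ, |c σ| ≤ M) (σ : Fin n → ℝ) : localSens c σ ≤ smoothSens b c σ := by
  have := le_ss b hb c M hM σ σ
  simpa [hammingDist_self] using this

lemma ss_nonneg {n : ℕ} (b : ℝ) (c : (Fin n → ℝ) → ℝ) (σ : Fin n → ℝ) :
    0 ≤ smoothSens b c σ :=
  Real.sSup_nonneg (by
    rintro x ⟨σ', rfl⟩
    exact mul_nonneg (ls_nonneg c σ') (Real.exp_pos _).le)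

lemma ss_le {n : ℕ} (b : ℝ) (hb : 0 < b) (c : (Fin n → ℝ) → ℝ) (M : ℝ)
    (hM : ∀ σ, |c σ| ≤ M) (σ : Fin n → ℝ) : smoothSens b c σ ≤ 2 * M :=
  Real.sSup_le (ss_bdd b hb c M hM σ)
    (by have := le_trans (abs_nonneg _) (hM σ); linarith)

lemma ss_smooth {n : ℕ} (b : ℝ) (hb : 0 < b) (c : (Fin n → ℝ) → ℝ) (M : ℝ)
    (hM : ∀ σ, |c σ| ≤ M) (σ τ : Fin n → ℝ) :
    smoothSens b c σ ≤ Real.exp (b * hammingDist σ τ) * smoothSens b c τ := by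
  apply Real.sSup_le
  · rintro x ⟨σ', rfl⟩
    have htri : (hammingDist τ σ' : ℝ) ≤ (hammingDist σ τ : ℝ) + (hammingDist σ σ' : ℝ) := by
      have h := hammingDist_triangle τ σ σ'
      rw [hammingDist_comm τ σ] at h
      exact_mod_cast h
    have hexp : Real.exp (-(b * hammingDist σ σ')) ≤
        Real.exp (b * hammingDist σ τ) * Real.exp (-(b * hammingDist τ σ')) := by
      rw [← Real.exp_add, Real.exp_le_exp]
      nlinarith
    calc localSens c σ' * Real.exp (-(b * hammingDist σ σ'))
        ≤ localSens c σ' * (Real.exp (b * hammingDist σ τ) * Real.exp (-(b * hammingDist τ σ'))) :=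
          mul_le_mul_of_nonneg_left hexp (ls_nonneg c σ')
    _ = Real.exp (b * hammingDist σ τ) * (localSens c σ' * Real.exp (-(b * hammingDist τ σ'))) := by
          ring
    _ ≤ Real.exp (b * hammingDist σ τ) * smoothSens b c τ :=
          mul_le_mul_of_nonneg_left (le_ss b hb c M hM τ σ') (Real.exp_pos _).le
  · exact mul_nonneg (Real.exp_pos _).le (ss_nonneg b c τ)

/-- (Smooth-sensitivity bound for the offset threshold) If
`g(σ) = f(σ) + (κ·o/a)·SS_{σ,b}(f)` with `κ = (1 − (exp(b) − 1)·o/a)⁻¹`, then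
`SS_{σ,b}(g) ≤ κ · SS_{σ,b}(f)`; in particular `κ · SS_{σ,b}(f)` is a `b`-smooth
upper bound on the local sensitivity of `g`. -/
theorem smoothSens_offset_threshold {n : ℕ} (b : ℝ) (hb : 0 < b)
    (f : (Fin n → ℝ) → ℝ) (M : ℝ) (hM : ∀ σ : Fin n → ℝ, |f σ| ≤ M)
    (a o : ℝ) (ha : 0 < a) (ho : 0 ≤ o)
    (hsmall : (Real.exp b - 1) * o / a < 1)
    (κ : ℝ) (hκ : κ = (1 - (Real.exp b - 1) * o / a)⁻¹)
    (g : (Fin n → ℝ) → ℝ)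
    (hg : ∀ σ : Fin n → ℝ, g σ = f σ + (κ * o / a) * smoothSens b f σ) :
    (∀ σ : Fin n → ℝ, smoothSens b g σ ≤ κ * smoothSens b f σ) ∧
    (∀ σ : Fin n → ℝ, localSens g σ ≤ κ * smoothSens b f σ) ∧
    (∀ σ σ' : Fin n → ℝ, hammingDist σ σ' = 1 →
      κ * smoothSens b f σ ≤ Real.exp b * (κ * smoothSens b f σ')) := by
  have hexpb : 1 < Real.exp b := by
    have := Real.add_one_le_exp b; linarith
  have hq0 : 0 ≤ (Real.exp b - 1) * o / a :=
    div_nonneg (mul_nonneg (by linarith) ho) ha.le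
  have h1q : 0 < 1 - (Real.exp b - 1) * o / a := by linarith
  have hκ0 : 0 < κ := hκ ▸ inv_pos.2 h1q
  have hc0 : 0 ≤ κ * o / a := div_nonneg (mul_nonneg hκ0.le ho) ha.le
  have hκq : κ * (1 - (Real.exp b - 1) * o / a) = 1 := by
    rw [hκ]; exact inv_mul_cancel₀ h1q.ne'
  have hkey : 1 + (κ * o / a) * (Real.exp b - 1) = κ := by
    linear_combination -hκq
  have hM0 : 0 ≤ M := le_trans (abs_nonneg _) (hM (fun _ => 0))
  -- g is bounded
  have hMg : ∀ τ : Fin n → ℝ, |g τ| ≤ M + (κ * o / a) * (2 * M) := by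
    intro τ
    rw [hg τ]
    calc |f τ + (κ * o / a) * smoothSens b f τ|
        ≤ |f τ| + |(κ * o / a) * smoothSens b f τ| := abs_add_le _ _
    _ = |f τ| + (κ * o / a) * smoothSens b f τ := by
        rw [abs_of_nonneg (mul_nonneg hc0 (ss_nonneg b f τ))]
    _ ≤ M + (κ * o / a) * (2 * M) :=
        add_le_add (hM τ) (mul_le_mul_of_nonneg_left (ss_le b hb f M hM τ) hc0)
  -- Step A : local sensitivity of g
  have hA : ∀ τ : Fin n → ℝ,
      localSens g τ ≤ localSens f τ + (κ * o / a) * (Real.exp b - 1) * smoothSens b f τ := by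
    intro τ
    have h0 : 0 ≤ localSens f τ + (κ * o / a) * (Real.exp b - 1) * smoothSens b f τ :=
      add_nonneg (ls_nonneg f τ)
        (mul_nonneg (mul_nonneg hc0 (by linarith)) (ss_nonneg b f τ))
    refine Real.sSup_le ?_ h0
    rintro x ⟨τ', hd, rfl⟩
    have hgd : g τ - g τ' =
        (f τ - f τ') + (κ * o / a) * (smoothSens b f τ - smoothSens b f τ') := by
      rw [hg τ, hg τ']; ring
    have hdd : (hammingDist τ τ' : ℝ) = 1 := by exact_mod_cast hd
    have h1 : smoothSens b f τ ≤ Real.exp b * smoothSens b f τ' := by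
      have h := ss_smooth b hb f M hM τ τ'
      rwa [hdd, mul_one] at h
    have h2 : smoothSens b f τ' ≤ Real.exp b * smoothSens b f τ := by
      have h := ss_smooth b hb f M hM τ' τ
      rwa [hammingDist_comm τ' τ, hdd, mul_one] at h
    have habs : |smoothSens b f τ - smoothSens b f τ'| ≤
        (Real.exp b - 1) * smoothSens b f τ := by
      rw [abs_sub_le_iff]
      constructor
      · nlinarith [Real.exp_pos b, Real.exp_pos (-b), Real.add_one_le_exp (-b),
          Real.add_one_le_exp b, ss_nonneg b f τ, ss_nonneg b f τ',
          Real.exp_neg b, mul_pos (Real.exp_pos b) (Real.exp_pos (-b)), h1,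
          mul_le_mul_of_nonneg_left h1 (Real.exp_pos (-b)).le]
      · nlinarith [ss_nonneg b f τ, h2]
    calc |g τ - g τ'|
        = |(f τ - f τ') + (κ * o / a) * (smoothSens b f τ - smoothSens b f τ')| := by
          rw [hgd]
    _ ≤ |f τ - f τ'| + |(κ * o / a) * (smoothSens b f τ - smoothSens b f τ')| := abs_add_le _ _
    _ = |f τ - f τ'| + (κ * o / a) * |smoothSens b f τ - smoothSens b f τ'| := by
          rw [abs_mul, abs_of_nonneg hc0]
    _ ≤ localSens f τ + (κ * o / a) * ((Real.exp b - 1) * smoothSens b f τ) :=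
          add_le_add (abs_le_ls f M hM hd) (mul_le_mul_of_nonneg_left habs hc0)
    _ = localSens f τ + (κ * o / a) * (Real.exp b - 1) * smoothSens b f τ := by ring
  refine ⟨?_, ?_, ?_⟩
  · -- first conjunct
    intro σ
    refine Real.sSup_le ?_ (mul_nonneg hκ0.le (ss_nonneg b f σ))
    rintro x ⟨τ, rfl⟩
    set E := Real.exp (-(b * (hammingDist σ τ : ℝ))) with hE
    have hE0 : 0 ≤ E := (Real.exp_pos _).le
    have hx1 : localSens f τ * E ≤ smoothSens b f σ := le_ss b hb f M hM σ τ
    have hx2 : smoothSens b f τ * E ≤ smoothSens b f σ := by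
      have h := ss_smooth b hb f M hM τ σ
      rw [hammingDist_comm τ σ] at h
      have hee : Real.exp (b * (hammingDist σ τ : ℝ)) * E = 1 := by
        rw [hE, ← Real.exp_add]; simp
      calc smoothSens b f τ * E
          ≤ (Real.exp (b * (hammingDist σ τ : ℝ)) * smoothSens b f σ) * E :=
            mul_le_mul_of_nonneg_right h hE0
      _ = smoothSens b f σ * (Real.exp (b * (hammingDist σ τ : ℝ)) * E) := by ring
      _ = smoothSens b f σ := by rw [hee, mul_one]
    calc localSens g τ * E
        ≤ (localSens f τ + (κ * o / a) * (Real.exp b - 1) * smoothSens b f τ) * E :=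
          mul_le_mul_of_nonneg_right (hA τ) hE0
    _ = localSens f τ * E + (κ * o / a) * (Real.exp b - 1) * (smoothSens b f τ * E) := by ring
    _ ≤ smoothSens b f σ + (κ * o / a) * (Real.exp b - 1) * smoothSens b f σ :=
          add_le_add hx1
            (mul_le_mul_of_nonneg_left hx2 (mul_nonneg hc0 (by linarith)))
    _ = (1 + (κ * o / a) * (Real.exp b - 1)) * smoothSens b f σ := by ring
    _ = κ * smoothSens b f σ := by rw [hkey]
  · -- second conjunct
    intro σ
    have h1 := hA σ
    have h2 := ls_le_ss b hb f M hM σ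
    calc localSens g σ
        ≤ localSens f σ + (κ * o / a) * (Real.exp b - 1) * smoothSens b f σ := h1
    _ ≤ smoothSens b f σ + (κ * o / a) * (Real.exp b - 1) * smoothSens b f σ := by linarith
    _ = (1 + (κ * o / a) * (Real.exp b - 1)) * smoothSens b f σ := by ring
    _ = κ * smoothSens b f σ := by rw [hkey]
  · -- third conjunct
    intro σ σ' hd
    have hdd : (hammingDist σ σ' : ℝ) = 1 := by exact_mod_cast hd
    have h := ss_smooth b hb f M hM σ σ'
    rw [hdd, mul_one] at h
    calc κ * smoothSens b f σ ≤ κ * (Real.exp b * smoothSens b f σ') :=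
          mul_le_mul_of_nonneg_left h hκ0.le
    _ = Real.exp b * (κ * smoothSens b f σ') := by ring
end
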